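/- Suppose T > R > P > S. Define p₂ = ((1+p₄)(R−S) − p₁(P−S))/(R−P) and p₃ = (−(1−p₁)(T−P) − p₄(T−R))/(R−P) for p₁, p₄ ∈ [0,1]. Then p₂ ≥ 1 and p₃ ≤ 0 always hold; consequently the only choice with all of p₁,p₂,p₃,p₄ ∈ [0,1] is p = (1,1,0,0). -/

import Mathlib

/-- When X tries to set her own score, always p₂ ≥ 1 and p₃ ≤ 0, so the only
probability vector is p = (1,1,0,0). -/
theorem zd_own_score_impossible (T R P S p1 p4 : ℝ)
    (hTR : T > R) (hRP : R > P) (hPS : P > S)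
    (hp1 : p1 ∈ Set.Icc (0 : ℝ) 1) (hp4 : p4 ∈ Set.Icc (0 : ℝ) 1) :
    let p2 := ((1 + p4) * (R - S) - p1 * (P - S)) / (R - P)
    let p3 := (-(1 - p1) * (T - P) - p4 * (T - R)) / (R - P)
    1 ≤ p2 ∧ p3 ≤ 0 ∧
      (p2 ∈ Set.Icc (0 : ℝ) 1 ∧ p3 ∈ Set.Icc (0 : ℝ) 1 →
        p1 = 1 ∧ p2 = 1 ∧ p3 = 0 ∧ p4 = 0) := by
  intro p2 p3
  obtain ⟨h10, h11⟩ := hp1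
  obtain ⟨h40, h41⟩ := hp4
  have hd : (0:ℝ) < R - P := by linarith
  have h2 : 1 ≤ p2 := by
    rw [le_div_iff₀ hd]
    nlinarith
  have h3 : p3 ≤ 0 := by
    apply div_nonpos_of_nonpos_of_nonneg _ hd.le
    nlinarith
  refine ⟨h2, h3, ?_⟩
  rintro ⟨⟨-, h2le⟩, -⟩
  have hnum : (1 + p4) * (R - S) - p1 * (P - S) ≤ R - P := by
    rw [div_le_one hd] at h2le
    exact h2le
  have hp1e : p1 = 1 := le_antisymm h11 (by nlinarith)
  have hp4e : p4 = 0 := le_antisymm (by nlinarith) h40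
  refine ⟨hp1e, ?_, ?_, hp4e⟩
  · show ((1 + p4) * (R - S) - p1 * (P - S)) / (R - P) = 1
    rw [hp1e, hp4e]
    field_simp
    ring
  · show (-(1 - p1) * (T - P) - p4 * (T - R)) / (R - P) = 0
    rw [hp1e, hp4e]
    simp
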